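/- arXiv:1901.06683 — 2 statements merged into one kernel-verified Lean document; each statement's English description precedes it below -/
import Mathlib

section
/- There is no prime power q = p^a ≥ 2 such that q³ - q + 1 divides 8a(q⁴-1)(q-1). -/
lemma aux_16a_lt : ∀ a : ℕ, 3 ≤ a → 16 * a < 4 ^ a := by
  intro a ha
  induction a, ha using Nat.le_induction with
  | base => norm_num
  | succ n hn ih =>
    have h4 : 4 ^ (n + 1) = 4 * 4 ^ n := by ring
    omega

/-- There is no prime power `q = p^a ≥ 2` such that `q³ - q + 1` divides
`8a(q⁴-1)(q-1)`. -/
theorem stmt_7 :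
    ¬ ∃ p a q : ℕ, p.Prime ∧ 0 < a ∧ q = p ^ a ∧
      (q ^ 3 - q + 1) ∣ 8 * a * (q ^ 4 - 1) * (q - 1) := by
  rintro ⟨p, a, q, hp, ha, hq, hdvd⟩
  have hq2 : 2 ≤ q := by
    rw [hq]; exact Nat.one_lt_pow (by omega) hp.two_le
  have hpow : 2 ^ a ≤ q := by
    rw [hq]; exact Nat.pow_le_pow_left hp.two_le a
  by_cases hbig : 16 * a + 1 ≤ q ^ 2
  · -- large case: size contradiction
    have hle1 : q ≤ q ^ 3 := Nat.le_self_pow (by norm_num) q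
    have hle2 : 1 ≤ q ^ 4 := Nat.one_le_pow _ _ (by omega)
    have hdvd' : ((q:ℤ) ^ 3 - (q:ℤ) + 1) ∣ 8 * (a:ℤ) * ((q:ℤ) ^ 4 - 1) * ((q:ℤ) - 1) := by
      have := Int.natCast_dvd_natCast.mpr hdvd
      push_cast [Nat.cast_sub hle1, Nat.cast_sub hle2, Nat.cast_sub (by omega : 1 ≤ q)] at this
      convert this using 2 <;> push_cast <;> ring
    obtain ⟨k, hk⟩ := hdvd'
    have key : ((q:ℤ) ^ 3 - (q:ℤ) + 1) ∣ 8 * (a:ℤ) * (2 * (q:ℤ) - 1) * (q:ℤ) :=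
      ⟨8 * (a:ℤ) * ((q:ℤ) ^ 2 - (q:ℤ) + 1) - k, by linear_combination -hk⟩
    have hco : IsCoprime ((q:ℤ) ^ 3 - (q:ℤ) + 1) (q:ℤ) :=
      ⟨1, -((q:ℤ) ^ 2 - 1), by ring⟩
    have key2 : ((q:ℤ) ^ 3 - (q:ℤ) + 1) ∣ 8 * (a:ℤ) * (2 * (q:ℤ) - 1) :=
      hco.dvd_of_dvd_mul_right key
    have hQ2 : (2 : ℤ) ≤ (q:ℤ) := by exact_mod_cast hq2
    have hQsq : (16 * (a:ℤ) + 1) ≤ (q:ℤ) ^ 2 := by exact_mod_cast hbig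
    have ha1 : (1 : ℤ) ≤ (a:ℤ) := by exact_mod_cast ha
    have hpos : (0 : ℤ) < 8 * (a:ℤ) * (2 * (q:ℤ) - 1) := by nlinarith
    have hle := Int.le_of_dvd hpos key2
    nlinarith
  · -- small case: a ≤ 2 and q small, check directly
    push_neg at hbig
    have h4a : 4 ^ a ≤ q ^ 2 := by
      calc 4 ^ a = (2 ^ a) ^ 2 := by
            rw [show (4:ℕ) = 2 ^ 2 from rfl, ← pow_mul, ← pow_mul, Nat.mul_comm]
        _ ≤ q ^ 2 := Nat.pow_le_pow_left hpow 2
    have ha2 : a ≤ 2 := by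
      by_contra h
      have := aux_16a_lt a (by omega)
      omega
    interval_cases a
    · -- a = 1
      rw [pow_one] at hq
      subst hq
      have hple : q ≤ 4 := by nlinarith
      interval_cases q
      · revert hdvd; decide
      · revert hdvd; decide
      · exact absurd hp (by decide)
    · -- a = 2
      rw [hq] at hbig
      have h81 : ¬ 3 ≤ p := by
        intro h3
        have h9 : 3 ^ 2 ≤ p ^ 2 := Nat.pow_le_pow_left h3 2
        have h81 : (3 ^ 2) ^ 2 ≤ (p ^ 2) ^ 2 := Nat.pow_le_pow_left h9 2
        norm_num at h81
        linarith
      have hpe : p = 2 := by have := hp.two_le; omega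
      subst hpe
      rw [show (2:ℕ) ^ 2 = 4 from by norm_num] at hq
      subst hq
      revert hdvd; decide
end

section
/- Let q ≥ 4 be a power of 2, v = q²(q³+1), e = gcd(5, q-2), and a = log₂ q. If k = m(v-1)/(ea) + 1 for a positive integer m with m < ea, and q divides k, then q ≤ ea - 1; since ea ≤ 5a ≤ q this is impossible, so q does not divide k. -/
lemma aux_5a_le (a : ℕ) (ha : 5 ≤ a) : 5 * a ≤ 2 ^ a := by
  induction a with
  | zero => omega
  | succ n ih =>
    rcases Nat.lt_or_ge n 5 with h | h
    · interval_cases n <;> simp_all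
    · have := ih (by omega)
      have h5 : 5 ≤ 2 ^ n := by
        calc 5 ≤ 5 * n := by omega
        _ ≤ 2 ^ n := ih (by omega)
      rw [pow_succ]
      omega

lemma aux_ea_le (a : ℕ) (ha : 2 ≤ a) : Nat.gcd 5 (2 ^ a - 2) * a ≤ 2 ^ a := by
  rcases Nat.lt_or_ge a 5 with h | h
  · interval_cases a <;> decide
  · have h1 : Nat.gcd 5 (2 ^ a - 2) ≤ 5 := Nat.le_of_dvd (by norm_num) (Nat.gcd_dvd_left _ _)
    calc Nat.gcd 5 (2 ^ a - 2) * a ≤ 5 * a := Nat.mul_le_mul_right a h1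
    _ ≤ 2 ^ a := aux_5a_le a h

/-- Let `q = 2^a ≥ 4`, `v = q²(q³+1)`, `e = gcd(5, q-2)`. If
`k = m(v-1)/(ea) + 1` for a positive integer `m` with `m < ea`, then `q` does
not divide `k`. -/
theorem stmt_18 (a q m k : ℕ) (hq : q = 2 ^ a) (hq4 : 4 ≤ q)
    (hm : 0 < m) (hmlt : m < Nat.gcd 5 (q - 2) * a)
    (hk : k * (Nat.gcd 5 (q - 2) * a) =
      m * (q ^ 2 * (q ^ 3 + 1) - 1) + Nat.gcd 5 (q - 2) * a) :
    ¬ q ∣ k := by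
  intro hdvd
  set E := Nat.gcd 5 (q - 2) * a with hE
  have ha2 : 2 ≤ a := by
    by_contra h
    push_neg at h
    interval_cases a <;> omega
  have hEq : E ≤ q := by
    rw [hE, hq]
    exact aux_ea_le a ha2
  -- work in ZMod q
  have hq0 : 0 < q := by omega
  have hv1 : 1 ≤ q ^ 2 * (q ^ 3 + 1) := Nat.one_le_iff_ne_zero.mpr (by positivity)
  have hzm : ((E - m : ℕ) : ZMod q) = 0 := by
    have hcast := congrArg (Nat.cast : ℕ → ZMod q) hk
    push_cast [Nat.cast_sub hv1, Nat.cast_sub (le_of_lt hmlt)] at hcast ⊢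
    have hk0 : (k : ZMod q) = 0 := (ZMod.natCast_eq_zero_iff k q).mpr hdvd
    have hq00 : (q : ZMod q) = 0 := ZMod.natCast_self q
    rw [hk0, hq00] at hcast
    ring_nf at hcast ⊢
    linear_combination -hcast
  have hdvd2 : q ∣ (E - m) := (ZMod.natCast_eq_zero_iff _ q).mp hzm
  have hpos : 0 < E - m := by omega
  have := Nat.le_of_dvd hpos hdvd2
  omega
end
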